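/- Let f(x) = N₀(2^(x/W) − 1) with N₀, W > 0, and define y(x) = f(x) − x·f′(x) for x > 0. Then y is strictly decreasing on (0, ∞), and its inverse is given by x = (W/ln 2)·[W₀(−y/(e·N₀) − 1/e) + 1], where W₀ is the principal branch of the Lambert W function. -/
import Mathlib

lemma aux_ge (u : ℝ) : -(1 / Real.exp 1) ≤ u * Real.exp u := by
  rcases le_or_gt 0 u with hu | hu
  · have h1 : 0 ≤ u * Real.exp u := mul_nonneg hu (Real.exp_pos u).le
    have h2 : 0 < 1 / Real.exp 1 := by positivity
    linarith
  · have h1 : -u - 1 + 1 ≤ Real.exp (-u - 1) := Real.add_one_le_exp _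
    have h2 : Real.exp (-u - 1) * Real.exp u = Real.exp (-1) := by
      rw [← Real.exp_add]; ring_nf
    have h3 : Real.exp (-1) = 1 / Real.exp 1 := by
      rw [Real.exp_neg]; ring
    have h4 := Real.exp_pos u
    nlinarith

lemma aux_mono : StrictMonoOn (fun u : ℝ => u * Real.exp u) (Set.Ici (-1)) := by
  apply strictMonoOn_of_deriv_pos (convex_Ici _)
  · fun_prop
  · intro u hu
    rw [interior_Ici] at hu
    have h : HasDerivAt (fun u : ℝ => u * Real.exp u)
        (1 * Real.exp u + u * Real.exp u) u :=
      (hasDerivAt_id u).mul (Real.hasDerivAt_exp u)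
    rw [h.deriv]
    have := Real.exp_pos u
    have : -1 < u := hu
    nlinarith [Real.exp_pos u]

/-- With f(x) = N₀(2^(x/B) − 1) and y(x) = f(x) − x·f′(x), the function y is
strictly decreasing on (0, ∞) and its inverse is
x = (B/ln 2)·(W₀(−y/(e·N₀) − 1/e) + 1), where W₀ is the principal Lambert W
branch (W₀(z)·e^{W₀(z)} = z on [−1/e, ∞)). -/
theorem stmt_3 (N₀ B : ℝ) (hN : 0 < N₀) (hB : 0 < B)
    (W₀ : ℝ → ℝ)
    (hW₀ : ∀ z : ℝ, -(1 / Real.exp 1) ≤ z → W₀ z * Real.exp (W₀ z) = z ∧ -1 ≤ W₀ z)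
    (f f' y : ℝ → ℝ)
    (hf : ∀ x : ℝ, f x = N₀ * ((2 : ℝ) ^ (x / B) - 1))
    (hf' : ∀ x : ℝ, f' x = N₀ * Real.log 2 / B * (2 : ℝ) ^ (x / B))
    (hy : ∀ x : ℝ, y x = f x - x * f' x) :
    StrictAntiOn y (Set.Ioi 0) ∧
    (∀ x : ℝ, 0 < x →
      x = (B / Real.log 2) *
        (W₀ (-(y x) / (Real.exp 1 * N₀) - 1 / Real.exp 1) + 1)) := by
  have hlog2 : 0 < Real.log 2 := Real.log_pos (by norm_num)
  set c : ℝ := Real.log 2 / B with hc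
  have hcpos : 0 < c := div_pos hlog2 hB
  have hrpow : ∀ x : ℝ, (2:ℝ) ^ (x / B) = Real.exp (c * x) := by
    intro x
    rw [Real.rpow_def_of_pos (by norm_num : (0:ℝ) < 2)]
    congr 1
    rw [hc]; field_simp
  have hyx : ∀ x : ℝ, y x = N₀ * (Real.exp (c*x) - 1) - x * (N₀ * c * Real.exp (c*x)) := by
    intro x
    rw [hy, hf, hf', hrpow, hc]
    field_simp
  constructor
  · have hyfun : Set.EqOn y
        (fun x => N₀ * (Real.exp (c*x) - 1) - x * (N₀ * c * Real.exp (c*x))) (Set.Ioi 0) := by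
      intro x _; exact hyx x
    apply StrictAntiOn.congr _ hyfun.symm
    apply strictAntiOn_of_deriv_neg (convex_Ioi 0)
    · fun_prop
    · intro x hx
      rw [interior_Ioi] at hx
      have h1 : HasDerivAt (fun x : ℝ => c * x) c x := by
        simpa using (hasDerivAt_id x).const_mul c
      have hE : HasDerivAt (fun x => Real.exp (c*x)) (Real.exp (c*x) * c) x := h1.exp
      have hg : HasDerivAt
          (fun x => N₀ * (Real.exp (c*x) - 1) - x * (N₀ * c * Real.exp (c*x)))
          (N₀ * (Real.exp (c*x) * c) -
            (1 * (N₀ * c * Real.exp (c*x)) + x * (N₀ * c * (Real.exp (c*x) * c)))) x :=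
        ((hE.sub_const 1).const_mul N₀).sub
          ((hasDerivAt_id x).mul (hE.const_mul (N₀ * c)))
      rw [hg.deriv]
      have hEp := Real.exp_pos (c*x)
      nlinarith [mul_pos (mul_pos hN (mul_pos hcpos hcpos)) (mul_pos hx hEp)]
  · intro x hx
    have hz : -(y x) / (Real.exp 1 * N₀) - 1 / Real.exp 1
        = (c*x - 1) * Real.exp (c*x - 1) := by
      rw [hyx, Real.exp_sub]
      have he := (Real.exp_pos 1).ne'
      field_simp
      ring
    rw [hz]
    obtain ⟨hw1, hw2⟩ := hW₀ ((c*x-1) * Real.exp (c*x-1)) (aux_ge _)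
    have hmem1 : W₀ ((c*x-1)*Real.exp (c*x-1)) ∈ Set.Ici (-1:ℝ) := hw2
    have hmem2 : c*x - 1 ∈ Set.Ici (-1:ℝ) := by
      have := mul_pos hcpos hx
      simp only [Set.mem_Ici]; linarith
    have heq : W₀ ((c*x-1)*Real.exp (c*x-1)) = c*x - 1 :=
      aux_mono.injOn hmem1 hmem2 hw1
    rw [heq, hc]
    field_simp
    ring
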